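/- Let (X, D) be a metric space, and let S ⊆ X be a set of cardinality 2n whose points are pairwise at distance at least ε > 0. Let P_X denote the space of finitely supported probability measures on X with the Wasserstein-1 (earthmover) distance W₁. Then there exists a map f from the Hamming cube {0,1}^n to P_X such that for all a, b ∈ {0,1}^n, W₁(f(a), f(b)) ≥ (ε/n) · H(a, b), where H is the Hamming distance. -/

import Mathlib

open MeasureTheory ENNReal

/-- Embedding of the Hamming cube into the Wasserstein space: if `S ⊆ X` has `2n` points
pairwise at distance at least `ε`, there is a map `f` from `{0,1}ⁿ` to (finitely supported)
probability measures on `X` such that `W₁(f(a), f(b)) ≥ (ε/n)·H(a,b)`; equivalently,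
every coupling of `f(a)` and `f(b)` has transportation cost at least `(ε/n)·H(a,b)`. -/
theorem hamming_embeds_into_wasserstein {X : Type*} [MetricSpace X]
    [MeasurableSpace X] [BorelSpace X]
    (n : ℕ) (hn : 0 < n) (ε : ℝ) (hε : 0 < ε)
    (S : Finset X) (hcard : S.card = 2 * n)
    (hsep : ∀ x ∈ S, ∀ y ∈ S, x ≠ y → ε ≤ dist x y) :
    ∃ f : (Fin n → Bool) → Measure X,
      (∀ a, IsProbabilityMeasure (f a)) ∧
      (∀ a, f a ((S : Set X)ᶜ) = 0) ∧
      ∀ a b : Fin n → Bool, ∀ γ : Measure (X × X), IsProbabilityMeasure γ →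
        γ.map Prod.fst = f a → γ.map Prod.snd = f b →
        (ε / n) * (hammingDist a b : ℝ) ≤ ∫ p : X × X, dist p.1 p.2 ∂γ := by
  classical
  -- enumeration of S
  set e : Fin (2 * n) → X := fun i => (S.equivFin.symm (Fin.cast hcard.symm i) : X) with he
  have he_mem : ∀ i, e i ∈ S := fun i => (S.equivFin.symm _).2
  have he_inj : Function.Injective e := by
    intro i j h
    have h1 : S.equivFin.symm (Fin.cast hcard.symm i)
        = S.equivFin.symm (Fin.cast hcard.symm j) := Subtype.ext h
    have h2 := S.equivFin.symm.injective h1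
    have h3 := congrArg Fin.val h2
    simpa [Fin.ext_iff] using h3
  set idx : Bool → Fin n → Fin (2 * n) := fun v i =>
    if v then ⟨n + i.val, by have := i.isLt; omega⟩ else ⟨i.val, by have := i.isLt; omega⟩
    with hidx
  have hidx_inj : ∀ v w : Bool, ∀ i j : Fin n, idx v i = idx w j → v = w ∧ i = j := by
    intro v w i j h
    have h' := congrArg Fin.val h
    have hi := i.isLt; have hj := j.isLt
    cases v <;> cases w <;> simp [hidx] at h' <;>
      constructor <;> first | rfl | (exact Fin.ext (by omega)) | omega
  set t : (Fin n → Bool) → Fin n → X := fun a i => e (idx (a i) i) with ht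
  have ht_mem : ∀ a i, t a i ∈ S := fun a i => he_mem _
  have ht_inj : ∀ a b : (Fin n → Bool), ∀ i j, t a i = t b j → a i = b j ∧ i = j := by
    intro a b i j h
    exact hidx_inj _ _ _ _ (he_inj h)
  set f : (Fin n → Bool) → Measure X :=
    fun a => ((n : ℝ≥0∞))⁻¹ • ∑ i : Fin n, Measure.dirac (t a i) with hf
  have hn0 : (n : ℝ≥0∞) ≠ 0 := Nat.cast_ne_zero.mpr hn.ne'
  have hnt : (n : ℝ≥0∞) ≠ ⊤ := ENNReal.natCast_ne_top n
  have hSmeas : MeasurableSet (S : Set X) := S.finite_toSet.isClosed.measurableSet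
  have hprob : ∀ a, IsProbabilityMeasure (f a) := by
    intro a
    constructor
    simp only [hf, Measure.smul_apply, Measure.coe_finset_sum, Finset.sum_apply,
      smul_eq_mul]
    simp [ENNReal.inv_mul_cancel hn0 hnt]
  have hsupp : ∀ a, f a ((S : Set X)ᶜ) = 0 := by
    intro a
    simp only [hf, Measure.smul_apply, Measure.coe_finset_sum, Finset.sum_apply,
      smul_eq_mul]
    have : ∀ i : Fin n, Measure.dirac (t a i) ((S : Set X)ᶜ) = 0 := by
      intro i
      rw [Measure.dirac_apply' _ hSmeas.compl]
      simp [ht_mem a i]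
    simp [this]
  refine ⟨f, hprob, hsupp, ?_⟩
  intro a b γ hγ hfst hsnd
  -- the set of moved points
  set K : Finset (Fin n) := Finset.univ.filter (fun i => a i ≠ b i) with hK
  have hham : hammingDist a b = K.card := rfl
  set A : Set X := ↑(K.image (fun i => t a i)) with hAdef
  have hA : MeasurableSet A := (K.image (fun i => t a i)).finite_toSet.isClosed.measurableSet
  have hmemA : ∀ i : Fin n, t a i ∈ A ↔ i ∈ K := by
    intro i
    simp only [hAdef, Finset.coe_image, Set.mem_image, Finset.mem_coe]
    constructor
    · rintro ⟨j, hj, hji⟩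
      rcases ht_inj a a j i hji with ⟨-, rfl⟩
      exact hj
    · intro hi; exact ⟨i, hi, rfl⟩
  have hbA : ∀ i : Fin n, t b i ∉ A := by
    intro i hi
    simp only [hAdef, Finset.coe_image, Set.mem_image, Finset.mem_coe] at hi
    rcases hi with ⟨j, hj, hji⟩
    rcases ht_inj a b j i hji.symm.symm with ⟨hab, rfl⟩
    have hj' : ¬ a j = b j := by simpa [hK] using hj
    exact hj' hab
  have hfaA : f a A = (K.card : ℝ≥0∞) / n := by
    simp only [hf, Measure.smul_apply, Measure.coe_finset_sum, Finset.sum_apply,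
      smul_eq_mul]
    have : ∀ i : Fin n, Measure.dirac (t a i) A = if i ∈ K then 1 else 0 := by
      intro i
      rw [Measure.dirac_apply' _ hA]
      by_cases h : i ∈ K
      · simp [Set.indicator_of_mem ((hmemA i).mpr h), h]
      · simp [Set.indicator_of_notMem (fun hh => h ((hmemA i).mp hh)), h]
    rw [Finset.sum_congr rfl (fun i _ => this i)]
    have h2 : (∑ i : Fin n, if i ∈ K then (1 : ℝ≥0∞) else 0) = (K.card : ℝ≥0∞) := by
      rw [← Finset.sum_filter]
      simp [hK]
    rw [h2, ENNReal.div_eq_inv_mul]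
  have hfbA : f b A = 0 := by
    simp only [hf, Measure.smul_apply, Measure.coe_finset_sum, Finset.sum_apply,
      smul_eq_mul]
    have : ∀ i : Fin n, Measure.dirac (t b i) A = 0 := by
      intro i
      rw [Measure.dirac_apply' _ hA]
      simp [Set.indicator_of_notMem (hbA i)]
    simp [this]
  -- transfer to γ
  have hγ1 : γ (Prod.fst ⁻¹' A) = (K.card : ℝ≥0∞) / n := by
    rw [← Measure.map_apply measurable_fst hA, hfst, hfaA]
  have hγ2 : γ (Prod.snd ⁻¹' A) = 0 := by
    rw [← Measure.map_apply measurable_snd hA, hsnd, hfbA]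
  set E : Set (X × X) := Prod.fst ⁻¹' A ∩ (Prod.snd ⁻¹' A)ᶜ with hEdef
  have hE : MeasurableSet E := (hA.preimage measurable_fst).inter
    (hA.preimage measurable_snd).compl
  have hγE : (K.card : ℝ≥0∞) / n ≤ γ E := by
    rw [← hγ1]
    calc γ (Prod.fst ⁻¹' A) ≤ γ (E ∪ Prod.snd ⁻¹' A) := by
          apply measure_mono
          intro p hp
          by_cases h : p.2 ∈ A
          · exact Or.inr h
          · exact Or.inl ⟨hp, h⟩
      _ ≤ γ E + γ (Prod.snd ⁻¹' A) := measure_union_le _ _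
      _ = γ E := by rw [hγ2, add_zero]
  -- a.e. marginals in S
  have hae1 : ∀ᵐ p : X × X ∂γ, p.1 ∈ S := by
    have : γ (Prod.fst ⁻¹' ((S : Set X)ᶜ)) = 0 := by
      rw [← Measure.map_apply measurable_fst hSmeas.compl, hfst, hsupp a]
    exact (ae_iff.mpr this)
  have hae2 : ∀ᵐ p : X × X ∂γ, p.2 ∈ S := by
    have : γ (Prod.snd ⁻¹' ((S : Set X)ᶜ)) = 0 := by
      rw [← Measure.map_apply measurable_snd hSmeas.compl, hsnd, hsupp b]
    exact (ae_iff.mpr this)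
  -- integrability
  obtain ⟨x0, hx0⟩ : ∃ x, x ∈ S := by
    have : 0 < S.card := by omega
    exact Finset.card_pos.mp this |>.imp (fun x hx => hx)
  set C : ℝ := S.sup' (⟨x0, hx0⟩) (fun x => dist x x0) with hC
  have hdistC : ∀ x ∈ S, dist x x0 ≤ C := fun x hx => by
    rw [hC]; exact Finset.le_sup' (fun x => dist x x0) hx
  -- a measurable representative of the distance function
  set g : X × X → ℝ := fun p => ∑ x ∈ S, ∑ y ∈ S,
      if p.1 = x then (if p.2 = y then dist x y else 0) else 0 with hg
  have hgmeas : Measurable g := by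
    apply Finset.measurable_sum
    intro x _
    apply Finset.measurable_sum
    intro y _
    have h1 : MeasurableSet {p : X × X | p.1 = x} :=
      (isClosed_singleton (x := x)).measurableSet.preimage measurable_fst
    have h2 : MeasurableSet {p : X × X | p.2 = y} :=
      (isClosed_singleton (x := y)).measurableSet.preimage measurable_snd
    exact Measurable.ite h1 (Measurable.ite h2 measurable_const measurable_const)
      measurable_const
  have hgd : ∀ p : X × X, p.1 ∈ S → p.2 ∈ S → g p = dist p.1 p.2 := by
    intro p h1 h2
    simp [hg, Finset.sum_ite_eq, Finset.sum_ite_eq', h1, h2]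
  have hgae : g =ᵐ[γ] (fun p : X × X => dist p.1 p.2) := by
    filter_upwards [hae1, hae2] with p h1 h2 using hgd p h1 h2
  have hasm : AEStronglyMeasurable (fun p : X × X => dist p.1 p.2) γ :=
    hgmeas.aestronglyMeasurable.congr hgae
  have hint : Integrable (fun p : X × X => dist p.1 p.2) γ := by
    refine Integrable.mono' (integrable_const (2 * C)) hasm ?_
    filter_upwards [hae1, hae2] with p h1 h2
    rw [Real.norm_of_nonneg dist_nonneg]
    calc dist p.1 p.2 ≤ dist p.1 x0 + dist x0 p.2 := dist_triangle _ _ _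
      _ ≤ C + C := add_le_add (hdistC _ h1) (by rw [dist_comm]; exact hdistC _ h2)
      _ = 2 * C := by ring
  -- lower bound on E
  have hlow : ∀ᵐ p : X × X ∂(γ.restrict E), ε ≤ dist p.1 p.2 := by
    rw [ae_restrict_iff' hE]
    filter_upwards [hae2] with p h2 hp
    rcases hp with ⟨hp1, hp2⟩
    have hp1S : p.1 ∈ S := by
      simp only [hAdef, Set.mem_preimage, Finset.coe_image, Set.mem_image] at hp1
      rcases hp1 with ⟨j, _, hj⟩
      exact hj ▸ ht_mem a j
    have hne : p.1 ≠ p.2 := by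
      intro h; apply hp2; rw [Set.mem_preimage, ← h]; exact hp1
    exact hsep _ hp1S _ h2 hne
  have hγEfin : γ E ≠ ⊤ := (measure_lt_top γ E).ne
  have hrealE : (K.card : ℝ) / n ≤ (γ E).toReal := by
    have h1 : ((K.card : ℝ≥0∞) / n).toReal ≤ (γ E).toReal :=
      ENNReal.toReal_mono hγEfin hγE
    rw [ENNReal.toReal_div] at h1
    simpa using h1
  calc (ε / n) * (hammingDist a b : ℝ)
      = ε * ((K.card : ℝ) / n) := by rw [hham]; ring
    _ ≤ ε * (γ E).toReal := by
        exact mul_le_mul_of_nonneg_left hrealE hε.le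
    _ = ∫ p in E, ε ∂γ := by
        rw [setIntegral_const, smul_eq_mul, measureReal_def]; ring
    _ ≤ ∫ p in E, dist p.1 p.2 ∂γ := by
        refine integral_mono_ae (integrable_const ε) hint.restrict hlow
    _ ≤ ∫ p : X × X, dist p.1 p.2 ∂γ := by
        refine setIntegral_le_integral hint ?_
        filter_upwards with p using dist_nonneg
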